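/- For a nonnegative square matrix G (entrywise nonnegative, m×m), the spectral radius satisfies ρ(G) = inf over diagonal matrices D with positive diagonal entries of the maximum column sum of D^{-1} G D, and also equals the infimum over such D of the maximum row sum of D^{-1} G D. -/

import Mathlib

open scoped NNReal ENNReal
attribute [local instance] Matrix.linftyOpNormedRing Matrix.linftyOpNormedAlgebra
open Matrix Filter

/-- The spectral radius of a real square matrix: supremum of the moduli of its complex
eigenvalues. -/
noncomputable def specRad {m : ℕ} (G : Matrix (Fin m) (Fin m) ℝ) : ℝ :=
  sSup ((fun (mu : ℂ) => ‖mu‖) '' spectrum ℂ (G.map (algebraMap ℝ ℂ)))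

/-- Maximum column sum (matrix 1-norm). -/
noncomputable def colNorm {m : ℕ} (Z : Matrix (Fin m) (Fin m) ℝ) : ℝ :=
  ⨆ j, ∑ i, |Z i j|

/-- Maximum row sum (matrix ∞-norm). -/
noncomputable def rowNorm {m : ℕ} (Z : Matrix (Fin m) (Fin m) ℝ) : ℝ :=
  ⨆ i, ∑ j, |Z i j|

lemma rowNorm_eq_norm {m : ℕ} [NeZero m] (Z : Matrix (Fin m) (Fin m) ℝ) :
    rowNorm Z = ‖Z.map (algebraMap ℝ ℂ)‖ := by
  have hval : ∀ i, ∑ j, |Z i j| = ((∑ j, ‖(Z.map (algebraMap ℝ ℂ)) i j‖₊ : ℝ≥0) : ℝ) := by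
    intro i
    push_cast
    refine Finset.sum_congr rfl fun j _ => ?_
    simp [Matrix.map_apply, Real.norm_eq_abs]
  rw [Matrix.linfty_opNorm_def]
  unfold rowNorm
  apply le_antisymm
  · refine ciSup_le fun i => ?_
    rw [hval i]
    exact NNReal.coe_le_coe.mpr (Finset.le_sup
      (f := fun i : Fin m => ∑ j, ‖(Z.map (algebraMap ℝ ℂ)) i j‖₊) (Finset.mem_univ i))
  · obtain ⟨i, -, hi⟩ := Finset.exists_mem_eq_sup Finset.univ Finset.univ_nonempty
      (fun i : Fin m => ∑ j, ‖(Z.map (algebraMap ℝ ℂ)) i j‖₊)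
    rw [hi, ← hval i]
    exact le_ciSup (f := fun i : Fin m => ∑ j, |Z i j|)
      (Set.Finite.bddAbove (Set.finite_range _)) i

lemma inv_diag {m : ℕ} (d : Fin m → ℝ) (hd : ∀ i, 0 < d i) :
    (Matrix.diagonal d)⁻¹ = Matrix.diagonal (fun i => (d i)⁻¹) := by
  refine Matrix.inv_eq_left_inv ?_
  rw [Matrix.diagonal_mul_diagonal]
  have : (fun i => (d i)⁻¹ * d i) = fun _ => (1:ℝ) := funext fun i => inv_mul_cancel₀ (hd i).ne'
  rw [this, Matrix.diagonal_one]

lemma scaled_apply {m : ℕ} (G : Matrix (Fin m) (Fin m) ℝ) (d : Fin m → ℝ) (hd : ∀ i, 0 < d i)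
    (i j : Fin m) : ((Matrix.diagonal d)⁻¹ * G * Matrix.diagonal d) i j
      = (d i)⁻¹ * G i j * d j := by
  rw [inv_diag d hd, Matrix.mul_diagonal, Matrix.diagonal_mul]

lemma spectrum_scaled {m : ℕ} (G : Matrix (Fin m) (Fin m) ℝ) (d : Fin m → ℝ)
    (hd : ∀ i, 0 < d i) :
    spectrum ℂ (((Matrix.diagonal d)⁻¹ * G * Matrix.diagonal d).map (algebraMap ℝ ℂ))
      = spectrum ℂ (G.map (algebraMap ℝ ℂ)) := by
  have hmap : ∀ A B : Matrix (Fin m) (Fin m) ℝ, (A * B).map (algebraMap ℝ ℂ)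
      = A.map (algebraMap ℝ ℂ) * B.map (algebraMap ℝ ℂ) := fun A B =>
    Matrix.map_mul
  have hdiagmap : ∀ v : Fin m → ℝ, (Matrix.diagonal v).map (algebraMap ℝ ℂ)
      = Matrix.diagonal (fun i => (algebraMap ℝ ℂ) (v i)) := fun v =>
    Matrix.diagonal_map (map_zero _)
  set u : (Matrix (Fin m) (Fin m) ℂ)ˣ :=
    { val := Matrix.diagonal (fun i => (algebraMap ℝ ℂ) (d i))
      inv := Matrix.diagonal (fun i => ((algebraMap ℝ ℂ) (d i))⁻¹)
      val_inv := by
        rw [Matrix.diagonal_mul_diagonal]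
        have : (fun i => (algebraMap ℝ ℂ) (d i) * ((algebraMap ℝ ℂ) (d i))⁻¹)
            = fun _ => (1:ℂ) := funext fun i => mul_inv_cancel₀ (by
          simpa using (hd i).ne')
        rw [this, Matrix.diagonal_one]
      inv_val := by
        rw [Matrix.diagonal_mul_diagonal]
        have : (fun i => ((algebraMap ℝ ℂ) (d i))⁻¹ * (algebraMap ℝ ℂ) (d i))
            = fun _ => (1:ℂ) := funext fun i => inv_mul_cancel₀ (by
          simpa using (hd i).ne')
        rw [this, Matrix.diagonal_one] }
  have hinv : (↑u⁻¹ : Matrix (Fin m) (Fin m) ℂ)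
      = Matrix.diagonal (fun i => (algebraMap ℝ ℂ) ((d i)⁻¹)) := by
    show u.inv = _
    simp only [u]
    congr 1
    funext i
    simp [map_inv₀]
  have key : ((Matrix.diagonal d)⁻¹ * G * Matrix.diagonal d).map (algebraMap ℝ ℂ)
      = (↑u⁻¹ : Matrix (Fin m) (Fin m) ℂ) * G.map (algebraMap ℝ ℂ)
        * (↑u : Matrix (Fin m) (Fin m) ℂ) := by
    rw [hmap, hmap, inv_diag d hd, hdiagmap, hdiagmap, hinv]
  rw [key]
  exact spectrum.units_conjugate'

set_option maxHeartbeats 1000000 in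
lemma specRad_le_rowNorm {m : ℕ} [NeZero m] (G : Matrix (Fin m) (Fin m) ℝ) (d : Fin m → ℝ)
    (hd : ∀ i, 0 < d i) :
    specRad G ≤ rowNorm ((Matrix.diagonal d)⁻¹ * G * Matrix.diagonal d) := by
  haveI : NormOneClass (Matrix (Fin m) (Fin m) ℂ) := by
    constructor
    rw [show (1 : Matrix (Fin m) (Fin m) ℂ) = Matrix.diagonal (fun _ => 1) by
      rw [Matrix.diagonal_one], Matrix.linfty_opNorm_diagonal]
    simp [Pi.norm_def]
    exact Finset.sup_const Finset.univ_nonempty _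
  refine Real.sSup_le ?_ (by rw [rowNorm_eq_norm]; exact norm_nonneg _)
  rintro x ⟨μ, hμ, rfl⟩
  rw [← spectrum_scaled G d hd] at hμ
  rw [rowNorm_eq_norm]
  simpa using spectrum.norm_le_norm_of_mem hμ

lemma specRad_nonneg {m : ℕ} (G : Matrix (Fin m) (Fin m) ℝ) : 0 ≤ specRad G :=
  Real.sSup_nonneg (by rintro x ⟨μ, -, rfl⟩; exact norm_nonneg _)

lemma spectralRadius_le_ofReal {m : ℕ} (G : Matrix (Fin m) (Fin m) ℝ) :
    spectralRadius ℂ (G.map (algebraMap ℝ ℂ)) ≤ ENNReal.ofReal (specRad G) := by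
  rw [spectralRadius]
  refine iSup₂_le fun k hk => ?_
  rw [← ENNReal.ofReal_coe_nnreal, coe_nnnorm]
  refine ENNReal.ofReal_le_ofReal ?_
  refine le_csSup ((((Matrix.finite_spectrum _).image _)).bddAbove) ?_
  exact Set.mem_image_of_mem _ hk

lemma pow_norm_bound {m : ℕ} [NeZero m] (G : Matrix (Fin m) (Fin m) ℝ) {r : ℝ}
    (hr : specRad G < r) :
    ∃ N : ℕ, ∀ n ≥ N, ‖(G.map (algebraMap ℝ ℂ)) ^ n‖ ≤ r ^ n := by
  haveI : CompleteSpace (Matrix (Fin m) (Fin m) ℂ) := FiniteDimensional.complete ℂ _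
  have hr0 : 0 < r := lt_of_le_of_lt (specRad_nonneg G) hr
  have h := spectrum.pow_nnnorm_pow_one_div_tendsto_nhds_spectralRadius
    (G.map (algebraMap ℝ ℂ))
  have hlt : spectralRadius ℂ (G.map (algebraMap ℝ ℂ)) < ENNReal.ofReal r :=
    lt_of_le_of_lt (spectralRadius_le_ofReal G)
      ((ENNReal.ofReal_lt_ofReal_iff hr0).mpr hr)
  have hev := h.eventually_lt_const hlt
  obtain ⟨N, hN⟩ := eventually_atTop.mp hev
  refine ⟨max N 1, fun n hn => ?_⟩
  have hn1 : 1 ≤ n := le_trans (le_max_right _ _) hn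
  have hnN : N ≤ n := le_trans (le_max_left _ _) hn
  have hb := hN n hnN
  have hnn : (n : ℝ) ≠ 0 := Nat.cast_ne_zero.mpr (by omega)
  have key : (‖(G.map (algebraMap ℝ ℂ)) ^ n‖₊ : ℝ≥0∞) ≤ (ENNReal.ofReal r) ^ (n : ℝ) := by
    have := ENNReal.rpow_le_rpow hb.le (Nat.cast_nonneg n : (0:ℝ) ≤ n)
    rwa [← ENNReal.rpow_mul, one_div, inv_mul_cancel₀ hnn, ENNReal.rpow_one] at this
  rw [ENNReal.ofReal_rpow_of_pos hr0, ← ENNReal.ofReal_coe_nnreal, coe_nnnorm] at key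
  have := (ENNReal.ofReal_le_ofReal_iff (by positivity)).mp key
  rwa [Real.rpow_natCast] at this

lemma pow_map {m : ℕ} (G : Matrix (Fin m) (Fin m) ℝ) (n : ℕ) :
    (G ^ n).map (algebraMap ℝ ℂ) = (G.map (algebraMap ℝ ℂ)) ^ n := by
  have := map_pow (RingHom.mapMatrix (algebraMap ℝ ℂ)) G n
  simpa [RingHom.mapMatrix_apply] using this

lemma pow_entry_nonneg {m : ℕ} (G : Matrix (Fin m) (Fin m) ℝ) (hG : ∀ i j, 0 ≤ G i j) :
    ∀ n i j, 0 ≤ (G ^ n) i j := by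
  intro n
  induction n with
  | zero => intro i j; by_cases h : i = j <;> simp [h, Matrix.one_apply]
  | succ n ih =>
    intro i j
    rw [pow_succ, Matrix.mul_apply]
    exact Finset.sum_nonneg fun k _ => mul_nonneg (ih i k) (hG k j)

lemma exists_scaling {m : ℕ} [NeZero m] (G : Matrix (Fin m) (Fin m) ℝ)
    (hG : ∀ i j, 0 ≤ G i j) {ε : ℝ} (hε : 0 < ε) :
    ∃ d : Fin m → ℝ, (∀ i, 0 < d i) ∧
      rowNorm ((Matrix.diagonal d)⁻¹ * G * Matrix.diagonal d) ≤ specRad G + ε := by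
  set ρ := specRad G
  have hρ0 : 0 ≤ ρ := specRad_nonneg G
  set r := ρ + ε / 2 with hrdef
  set P := ρ + ε with hPdef
  have hr0 : 0 < r := by positivity
  have hP0 : 0 < P := by positivity
  have hrP : r < P := by simp [hrdef, hPdef]; linarith
  obtain ⟨N₀, hN₀⟩ := pow_norm_bound G (show ρ < r by simp [hrdef]; linarith)
  set N := max N₀ 1 with hN
  set S : ℕ → Fin m → ℝ := fun n i => ∑ j, (G ^ n) i j with hS
  have hSnn : ∀ n i, 0 ≤ S n i := fun n i =>
    Finset.sum_nonneg fun j _ => pow_entry_nonneg G hG n i j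
  have hS0 : ∀ i, S 0 i = 1 := by
    intro i
    simp [hS, Matrix.one_apply]
  have hSrec : ∀ n i, S (n + 1) i = ∑ j, G i j * S n j := by
    intro n i
    simp only [hS, pow_succ']
    simp_rw [Matrix.mul_apply, Finset.mul_sum]
    rw [Finset.sum_comm]
  have hSle : ∀ n i, n ≥ N → S n i ≤ r ^ n := by
    intro n i hn
    have h1 : S n i ≤ rowNorm (G ^ n) := by
      have : S n i = ∑ j, |(G ^ n) i j| :=
        Finset.sum_congr rfl fun j _ => (abs_of_nonneg (pow_entry_nonneg G hG n i j)).symm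
      rw [this]
      exact le_ciSup (f := fun i => ∑ j, |(G ^ n) i j|)
        (Set.Finite.bddAbove (Set.finite_range _)) i
    have h2 : rowNorm (G ^ n) ≤ r ^ n := by
      rw [rowNorm_eq_norm, pow_map]
      exact hN₀ n (le_trans (le_max_left _ _) hn)
    exact h1.trans h2
  set a : Fin m → ℕ → ℝ := fun i n => P⁻¹ ^ n * S n i with ha
  have hann : ∀ i n, 0 ≤ a i n := fun i n =>
    mul_nonneg (by positivity) (hSnn n i)
  set q : ℝ := r / P with hq
  have hq0 : 0 ≤ q := by positivity
  have hq1 : q < 1 := by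
    rw [hq, div_lt_one hP0]; exact hrP
  have hsum : ∀ i, Summable (a i) := by
    intro i
    rw [← summable_nat_add_iff N]
    refine Summable.of_nonneg_of_le (fun n => hann i _) (fun n => ?_)
      (summable_geometric_of_lt_one hq0 hq1)
    have h1 : a i (n + N) ≤ P⁻¹ ^ (n + N) * r ^ (n + N) := by
      refine mul_le_mul_of_nonneg_left ?_ (by positivity)
      exact hSle _ i (by omega)
    have h2 : P⁻¹ ^ (n + N) * r ^ (n + N) = q ^ (n + N) := by
      rw [hq, div_pow, inv_pow, ← div_eq_inv_mul]
    have h3 : q ^ (n + N) ≤ q ^ n := by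
      rw [pow_add]
      nth_rewrite 2 [← mul_one (q ^ n)]
      exact mul_le_mul_of_nonneg_left (pow_le_one₀ hq0 hq1.le) (by positivity)
    calc a i (n + N) ≤ P⁻¹ ^ (n + N) * r ^ (n + N) := h1
      _ = q ^ (n + N) := h2
      _ ≤ q ^ n := h3
  set x : Fin m → ℝ := fun i => ∑' n, a i n with hx
  have hx1 : ∀ i, 1 ≤ x i := by
    intro i
    have h0 : a i 0 = 1 := by simp [ha, hS0]
    calc (1:ℝ) = a i 0 := h0.symm
      _ ≤ x i := Summable.le_tsum (hsum i) 0 fun n _ => hann i n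
  have hxpos : ∀ i, 0 < x i := fun i => lt_of_lt_of_le one_pos (hx1 i)
  have hkey : ∀ i, ∑ j, G i j * x j ≤ P * x i := by
    intro i
    have hsum1 : ∀ j, Summable (fun n => G i j * a j n) := fun j => (hsum j).mul_left _
    have e1 : ∑ j, G i j * x j = ∑' n, ∑ j, G i j * a j n := by
      have step : ∑ j, G i j * x j = ∑ j, ∑' n, G i j * a j n :=
        Finset.sum_congr rfl fun j _ => (tsum_mul_left).symm
      rw [step]
      exact (Summable.tsum_finsetSum (fun j _ => hsum1 j)).symm
    have e2 : ∀ n, ∑ j, G i j * a j n = P⁻¹ ^ n * S (n + 1) i := by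
      intro n
      rw [hSrec n i, Finset.mul_sum]
      refine Finset.sum_congr rfl fun j _ => ?_
      simp only [ha]
      ring
    have hsum2 : Summable (fun n => a i (n + 1)) := (summable_nat_add_iff 1).mpr (hsum i)
    have e3 : ∑' n, P⁻¹ ^ n * S (n + 1) i = P * ∑' n, a i (n + 1) := by
      rw [← tsum_mul_left]
      refine tsum_congr fun n => ?_
      simp only [ha]
      rw [pow_succ]
      field_simp
    have e4 : ∑' n, a i (n + 1) = x i - 1 := by
      have h0 : a i 0 = 1 := by simp [ha, hS0]
      have ht := Summable.tsum_eq_zero_add (hsum i)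
      rw [h0] at ht
      have hxi : x i = ∑' n, a i n := rfl
      rw [hxi, ht]
      ring
    rw [e1]
    rw [tsum_congr e2, e3, e4]
    have : P * (x i - 1) ≤ P * x i := by nlinarith [hxpos i]
    exact this
  refine ⟨x, hxpos, ?_⟩
  refine ciSup_le fun i => ?_
  have : ∑ j, |((Matrix.diagonal x)⁻¹ * G * Matrix.diagonal x) i j|
      = (x i)⁻¹ * ∑ j, G i j * x j := by
    rw [Finset.mul_sum]
    refine Finset.sum_congr rfl fun j _ => ?_
    rw [scaled_apply G x hxpos i j, abs_of_nonneg]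
    · ring
    · have := hxpos i
      have := hxpos j
      have := hG i j
      positivity
  rw [this]
  calc (x i)⁻¹ * ∑ j, G i j * x j ≤ (x i)⁻¹ * (P * x i) :=
        mul_le_mul_of_nonneg_left (hkey i) (inv_nonneg.mpr (hxpos i).le)
    _ = P := by
        rw [mul_comm P (x i), ← mul_assoc, inv_mul_cancel₀ (hxpos i).ne', one_mul]

/-- The main theorem for row norms, positive dimension. -/
lemma specRad_eq_row {m : ℕ} [NeZero m] (G : Matrix (Fin m) (Fin m) ℝ)
    (hG : ∀ i j, 0 ≤ G i j) :
    specRad G = sInf {r : ℝ | ∃ d : Fin m → ℝ, (∀ i, 0 < d i) ∧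
        r = rowNorm ((Matrix.diagonal d)⁻¹ * G * Matrix.diagonal d)} := by
  set s := {r : ℝ | ∃ d : Fin m → ℝ, (∀ i, 0 < d i) ∧
      r = rowNorm ((Matrix.diagonal d)⁻¹ * G * Matrix.diagonal d)} with hs
  have hne : s.Nonempty :=
    ⟨rowNorm ((Matrix.diagonal (fun _ => 1))⁻¹ * G * Matrix.diagonal (fun _ => 1)),
      fun _ => (1:ℝ), fun _ => one_pos, rfl⟩
  have hlb : ∀ r ∈ s, specRad G ≤ r := by
    rintro r ⟨d, hd, rfl⟩
    exact specRad_le_rowNorm G d hd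
  refine le_antisymm (le_csInf hne hlb) ?_
  refine le_of_forall_pos_le_add fun ε hε => ?_
  obtain ⟨d, hd, hle⟩ := exists_scaling G hG hε
  exact le_trans (csInf_le ⟨specRad G, hlb⟩ ⟨d, hd, rfl⟩) hle

lemma spectrum_transpose {m : ℕ} (M : Matrix (Fin m) (Fin m) ℂ) :
    spectrum ℂ Mᵀ = spectrum ℂ M := by
  ext μ
  simp only [spectrum.mem_iff, not_iff_not, Matrix.isUnit_iff_isUnit_det]
  have : (algebraMap ℂ _ μ - Mᵀ) = (algebraMap ℂ (Matrix (Fin m) (Fin m) ℂ) μ - M)ᵀ := by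
    simp [Matrix.transpose_sub, Matrix.algebraMap_eq_diagonal]
  rw [this, Matrix.det_transpose]

lemma specRad_transpose {m : ℕ} (G : Matrix (Fin m) (Fin m) ℝ) :
    specRad Gᵀ = specRad G := by
  unfold specRad
  rw [Matrix.transpose_map, spectrum_transpose]

lemma colNorm_eq_rowNorm_transpose {m : ℕ} (G : Matrix (Fin m) (Fin m) ℝ) (d : Fin m → ℝ)
    (hd : ∀ i, 0 < d i) :
    colNorm ((Matrix.diagonal d)⁻¹ * G * Matrix.diagonal d)
      = rowNorm ((Matrix.diagonal (fun i => (d i)⁻¹))⁻¹ * Gᵀ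
          * Matrix.diagonal (fun i => (d i)⁻¹)) := by
  have hd' : ∀ i, 0 < (d i)⁻¹ := fun i => inv_pos.mpr (hd i)
  unfold colNorm rowNorm
  refine iSup_congr fun j => ?_
  refine Finset.sum_congr rfl fun i _ => ?_
  rw [scaled_apply G d hd i j, scaled_apply Gᵀ _ hd' j i]
  rw [Matrix.transpose_apply, inv_inv]
  congr 1
  ring

/-- The set of column norms of scalings of `G` equals the set of row norms of scalings
of `Gᵀ`. -/
lemma col_set_eq_row_set {m : ℕ} (G : Matrix (Fin m) (Fin m) ℝ) :
    {r : ℝ | ∃ d : Fin m → ℝ, (∀ i, 0 < d i) ∧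
        r = colNorm ((Matrix.diagonal d)⁻¹ * G * Matrix.diagonal d)}
      = {r : ℝ | ∃ d : Fin m → ℝ, (∀ i, 0 < d i) ∧
        r = rowNorm ((Matrix.diagonal d)⁻¹ * Gᵀ * Matrix.diagonal d)} := by
  ext r
  constructor
  · rintro ⟨d, hd, rfl⟩
    exact ⟨fun i => (d i)⁻¹, fun i => inv_pos.mpr (hd i),
      colNorm_eq_rowNorm_transpose G d hd⟩
  · rintro ⟨d, hd, rfl⟩
    refine ⟨fun i => (d i)⁻¹, fun i => inv_pos.mpr (hd i), ?_⟩
    rw [colNorm_eq_rowNorm_transpose G _ (fun i => inv_pos.mpr (hd i))]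
    have hdd : (fun i => (d i)⁻¹⁻¹) = d := funext fun i => inv_inv _
    rw [hdd]

/-- For an entrywise nonnegative matrix `G`, the spectral radius equals the infimum over
positive diagonal scalings `D` of the maximum column sum of `D⁻¹ G D`, and likewise of
the maximum row sum. -/
theorem specRad_eq_inf_diag_scaling {m : ℕ} (G : Matrix (Fin m) (Fin m) ℝ)
    (hG : ∀ i j, 0 ≤ G i j) :
    specRad G = sInf {r : ℝ | ∃ d : Fin m → ℝ, (∀ i, 0 < d i) ∧
        r = colNorm ((Matrix.diagonal d)⁻¹ * G * Matrix.diagonal d)} ∧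
    specRad G = sInf {r : ℝ | ∃ d : Fin m → ℝ, (∀ i, 0 < d i) ∧
        r = rowNorm ((Matrix.diagonal d)⁻¹ * G * Matrix.diagonal d)} := by
  rcases Nat.eq_zero_or_pos m with hm | hm
  · subst hm
    have hspec : specRad G = 0 := by
      unfold specRad
      have : spectrum ℂ (G.map (algebraMap ℝ ℂ)) = ∅ := by
        rw [Set.eq_empty_iff_forall_notMem]
        intro μ hμ
        exact (spectrum.mem_iff.mp hμ) (isUnit_of_subsingleton _)
      rw [this, Set.image_empty, Real.sSup_empty]
    have hcol : {r : ℝ | ∃ d : Fin 0 → ℝ, (∀ i, 0 < d i) ∧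
        r = colNorm ((Matrix.diagonal d)⁻¹ * G * Matrix.diagonal d)} = {0} := by
      ext r
      constructor
      · rintro ⟨d, hd, rfl⟩
        simp [colNorm, Real.iSup_of_isEmpty]
      · rintro rfl
        exact ⟨fun i => 1, fun i => one_pos, by simp [colNorm, Real.iSup_of_isEmpty]⟩
    have hrow : {r : ℝ | ∃ d : Fin 0 → ℝ, (∀ i, 0 < d i) ∧
        r = rowNorm ((Matrix.diagonal d)⁻¹ * G * Matrix.diagonal d)} = {0} := by
      ext r
      constructor
      · rintro ⟨d, hd, rfl⟩
        simp [rowNorm, Real.iSup_of_isEmpty]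
      · rintro rfl
        exact ⟨fun i => 1, fun i => one_pos, by simp [rowNorm, Real.iSup_of_isEmpty]⟩
    rw [hspec, hcol, hrow, csInf_singleton]
    exact ⟨rfl, rfl⟩
  · haveI : NeZero m := ⟨hm.ne'⟩
    constructor
    · rw [col_set_eq_row_set G, ← specRad_transpose G]
      exact specRad_eq_row Gᵀ (fun i j => hG j i)
    · exact specRad_eq_row G hG
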